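/- For an ergodic finite Markov chain, all triangles formed by the Euclidean embedding realizing commuting times as squared distances have weakly acute angles; equivalently, for all a, b, c, ‖f(a)−f(c)‖² ≤ ‖f(a)−f(b)‖² + ‖f(b)−f(c)‖², i.e., the inner product ⟨f(a)−f(b), f(c)−f(b)⟩ ≥ 0. -/

import Mathlib

lemma pow_entry_nonneg {n : ℕ} (P : Matrix (Fin n) (Fin n) ℝ)
    (hP0 : ∀ i j, 0 ≤ P i j) : ∀ k i j, 0 ≤ (P ^ k) i j := by
  intro k
  induction k with
  | zero =>
    intro i j
    simp [Matrix.one_apply]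
    split <;> norm_num
  | succ k ih =>
    intro i j
    rw [pow_succ, Matrix.mul_apply]
    exact Finset.sum_nonneg fun l _ => mul_nonneg (ih i l) (hP0 l j)

lemma M_nonneg {n : ℕ} (P : Matrix (Fin n) (Fin n) ℝ)
    (hP0 : ∀ i j, 0 ≤ P i j) (hP1 : ∀ i, ∑ j, P i j = 1)
    (M : Fin n → Fin n → ℝ)
    (hMdiag : ∀ b, M b b = 0)
    (hMstep : ∀ a b, a ≠ b → M a b = 1 + ∑ j, P a j * M j b) :
    ∀ a b, 0 ≤ M a b := by
  intro a b
  have hne : (Finset.univ : Finset (Fin n)).Nonempty := ⟨a, Finset.mem_univ a⟩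
  obtain ⟨a0, -, hmin⟩ := Finset.exists_min_image Finset.univ (fun x => M x b) hne
  have hmin' : ∀ x, M a0 b ≤ M x b := fun x => hmin x (Finset.mem_univ x)
  by_cases h : a0 = b
  · calc (0:ℝ) = M a0 b := by rw [h, hMdiag]
      _ ≤ M a b := hmin' a
  · exfalso
    have h1 : M a0 b = 1 + ∑ j, P a0 j * M j b := hMstep a0 b h
    have h2 : ∑ j, P a0 j * M a0 b ≤ ∑ j, P a0 j * M j b :=
      Finset.sum_le_sum fun j _ => mul_le_mul_of_nonneg_left (hmin' j) (hP0 a0 j)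
    have h3 : ∑ j, P a0 j * M a0 b = M a0 b := by
      rw [← Finset.sum_mul, hP1, one_mul]
    linarith

lemma M_triangle {n : ℕ} (P : Matrix (Fin n) (Fin n) ℝ)
    (hP0 : ∀ i j, 0 ≤ P i j) (hP1 : ∀ i, ∑ j, P i j = 1)
    (herg : ∃ k : ℕ, ∀ i j, 0 < (P ^ k) i j)
    (M : Fin n → Fin n → ℝ)
    (hMdiag : ∀ b, M b b = 0)
    (hMstep : ∀ a b, a ≠ b → M a b = 1 + ∑ j, P a j * M j b) :
    ∀ a b c, M a c ≤ M a b + M b c := by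
  intro a b c
  set u : Fin n → ℝ := fun x => M x b + M b c - M x c with hu
  have hub : u b = 0 := by simp [hu, hMdiag]
  have huc : u c = M c b + M b c := by simp [hu, hMdiag]
  have hMnn := M_nonneg P hP0 hP1 M hMdiag hMstep
  -- harmonicity off {b, c}
  have hharm : ∀ x, x ≠ b → x ≠ c → u x = ∑ j, P x j * u j := by
    intro x hxb hxc
    have e1 := hMstep x b hxb
    have e2 := hMstep x c hxc
    have e3 : ∑ j, P x j * u j
        = (∑ j, P x j * M j b) + (∑ j, P x j) * M b c - ∑ j, P x j * M j c := by
      simp only [hu, mul_sub, mul_add, Finset.sum_sub_distrib, Finset.sum_add_distrib,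
        Finset.sum_mul]
    rw [e3, hP1, hu]
    simp only
    rw [e1, e2]
    ring
  -- minimum
  have hne : (Finset.univ : Finset (Fin n)).Nonempty := ⟨a, Finset.mem_univ a⟩
  obtain ⟨a0, -, hmin⟩ := Finset.exists_min_image Finset.univ u hne
  have hmin' : ∀ x, u a0 ≤ u x := fun x => hmin x (Finset.mem_univ x)
  set m := u a0 with hm
  have key : 0 ≤ m := by
    by_contra hneg
    push_neg at hneg
    -- propagation: minimizers off {b,c} propagate to successors
    have hstep : ∀ x, u x = m → ∀ j, 0 < P x j → u j = m := by
      intro x hx j hpj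
      have hxb : x ≠ b := by
        intro h; rw [h, hub] at hx; rw [← hx] at hneg; exact absurd le_rfl (not_le.mpr hneg)
      have hxc : x ≠ c := by
        intro h; rw [h, huc] at hx
        exact absurd (hx ▸ add_nonneg (hMnn c b) (hMnn b c)) (not_le.mpr hneg)
      have h1 : ∑ l, P x l * (u l - m) = 0 := by
        have hh := hharm x hxb hxc
        have hs : ∑ l, P x l * m = m := by rw [← Finset.sum_mul, hP1, one_mul]
        calc ∑ l, P x l * (u l - m)
            = (∑ l, P x l * u l) - ∑ l, P x l * m := by
              simp [mul_sub, Finset.sum_sub_distrib]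
          _ = 0 := by rw [← hh, hs, hx, sub_self]
      have h2 : ∀ l ∈ Finset.univ, 0 ≤ P x l * (u l - m) :=
        fun l _ => mul_nonneg (hP0 x l) (sub_nonneg.mpr (hmin' l))
      have h3 := (Finset.sum_eq_zero_iff_of_nonneg h2).mp h1 j (Finset.mem_univ j)
      rcases mul_eq_zero.mp h3 with h | h
      · exact absurd h (ne_of_gt hpj)
      · linarith [sub_eq_zero.mp h]
    have hclosed : ∀ k x j, u x = m → 0 < (P ^ k) x j → u j = m := by
      intro k
      induction k with
      | zero =>
        intro x j hx hpos
        rw [pow_zero] at hpos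
        by_cases h : x = j
        · rw [← h]; exact hx
        · simp [Matrix.one_apply, h] at hpos
      | succ k ih =>
        intro x j hx hpos
        rw [pow_succ, Matrix.mul_apply] at hpos
        have : ∃ l, 0 < (P ^ k) x l * P l j := by
          by_contra hall
          push_neg at hall
          have : ∑ l, (P ^ k) x l * P l j ≤ 0 := Finset.sum_nonpos fun l _ => hall l
          linarith
        obtain ⟨l, hl⟩ := this
        have hl1 : 0 < (P ^ k) x l :=
          lt_of_le_of_ne (pow_entry_nonneg P hP0 k x l)
            (by intro h; rw [← h] at hl; simp at hl)
        have hl2 : 0 < P l j := lt_of_le_of_ne (hP0 l j)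
          (by intro h; rw [← h, mul_zero] at hl; simp at hl)
        exact hstep l (ih x l hx hl1) j hl2
    obtain ⟨k, hk⟩ := herg
    have := hclosed k a0 b rfl (hk a0 b)
    rw [hub] at this
    rw [this] at hneg
    exact absurd le_rfl (not_le.mpr hneg)
  have := hmin' a
  simp only [hu, hm] at this key ⊢
  linarith


/-- In a Euclidean embedding realizing commuting times as squared distances,
all angles are weakly acute: `‖f a - f c‖² ≤ ‖f a - f b‖² + ‖f b - f c‖²`,
equivalently `⟪f a - f b, f c - f b⟫ ≥ 0`. -/
theorem embedding_angles_weakly_acute {n d : ℕ}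
    (P : Matrix (Fin n) (Fin n) ℝ)
    (hP0 : ∀ i j, 0 ≤ P i j) (hP1 : ∀ i, ∑ j, P i j = 1)
    (herg : ∃ k : ℕ, ∀ i j, 0 < (P ^ k) i j)
    (M : Fin n → Fin n → ℝ)
    (hMdiag : ∀ b, M b b = 0)
    (hMstep : ∀ a b, a ≠ b → M a b = 1 + ∑ j, P a j * M j b)
    (T : Fin n → Fin n → ℝ)
    (hT : ∀ a b, T a b = M a b + M b a)
    (f : Fin n → EuclideanSpace ℝ (Fin d))
    (hf : ∀ a b, ‖f a - f b‖ ^ 2 = T a b) :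
    ∀ a b c,
      ‖f a - f c‖ ^ 2 ≤ ‖f a - f b‖ ^ 2 + ‖f b - f c‖ ^ 2 ∧
      0 ≤ (inner ℝ (f a - f b) (f c - f b) : ℝ) := by
  intro a b c
  have ht1 : M a c ≤ M a b + M b c := M_triangle P hP0 hP1 herg M hMdiag hMstep a b c
  have ht2 : M c a ≤ M c b + M b a := M_triangle P hP0 hP1 herg M hMdiag hMstep c b a
  have hTtri : T a c ≤ T a b + T b c := by rw [hT, hT, hT]; linarith
  have h1 : ‖f a - f c‖ ^ 2 ≤ ‖f a - f b‖ ^ 2 + ‖f b - f c‖ ^ 2 := by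
    rw [hf, hf, hf]; exact hTtri
  refine ⟨h1, ?_⟩
  have hd : f a - f c = (f a - f b) - (f c - f b) := by abel
  have hexp : ‖(f a - f b) - (f c - f b)‖ ^ 2
      = ‖f a - f b‖ ^ 2 - 2 * (inner ℝ (f a - f b) (f c - f b) : ℝ) + ‖f c - f b‖ ^ 2 :=
    norm_sub_sq_real _ _
  have hsym : ‖f b - f c‖ = ‖f c - f b‖ := norm_sub_rev _ _
  rw [hd] at h1
  rw [hexp] at h1
  rw [hsym] at h1
  linarith
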